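/- arXiv:1905.02913 — 2 statements merged into one kernel-verified Lean document; each statement's English description precedes it below -/
import Mathlib

section
/- Let σ : Σ_R → Σ_R be a two-sided subshift of finite type and φ : Σ_R → ℝ a function with var_k φ ≤ b c^k for all k ≥ 0 (some b > 0, 0 < c < 1). Then there exists a continuous function u : Σ_R → ℝ such that ψ := φ + u∘σ − u also satisfies var_k ψ ≤ b' c'^k for some b' > 0, 0 < c' < 1, and ψ(x) = ψ(y) whenever x_i = y_i for all i ≥ 0. -/
/-- The two-sided subshift of finite type determined by a 0-1 transition matrix `R`. -/
abbrev Subshift (n : ℕ) (R : Fin n → Fin n → Bool) : Type :=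
  {x : ℤ → Fin n // ∀ i : ℤ, R (x i) (x (i + 1)) = true}

/-- The left shift on a two-sided subshift of finite type. -/
def Subshift.shift {n : ℕ} {R : Fin n → Fin n → Bool} (x : Subshift n R) : Subshift n R :=
  ⟨fun i => x.1 (i + 1), fun i => x.2 (i + 1)⟩

namespace BowenAux

variable {n : ℕ} {R : Fin n → Fin n → Bool}

lemma shift_iter (j : ℕ) (x : Subshift n R) (i : ℤ) :
    (Subshift.shift^[j] x).1 i = x.1 (i + j) := by
  induction j generalizing x i with
  | zero => simp
  | succ j ih =>
    rw [Function.iterate_succ_apply, ih]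
    show x.1 (i + j + 1) = _
    push_cast
    ring_nf

open Classical in
/-- A canonical point of the subshift whose zeroth coordinate is `a`, when one exists. -/
noncomputable def pick [Nonempty (Subshift n R)] (a : Fin n) : Subshift n R :=
  if h : ∃ z : Subshift n R, z.1 0 = a then h.choose else Classical.arbitrary (Subshift n R)

lemma pick_zero [Nonempty (Subshift n R)] (a : Fin n) (h : ∃ z : Subshift n R, z.1 0 = a) :
    (pick (R := R) a).1 0 = a := by
  classical
  rw [pick, dif_pos h]
  exact h.choose_spec

/-- Replace the (strictly negative) past of `x` by a canonical past determined by `x 0`. -/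
noncomputable def rmap [Nonempty (Subshift n R)] (x : Subshift n R) : Subshift n R :=
  ⟨fun i => if 0 ≤ i then x.1 i else (pick (R := R) (x.1 0)).1 i, by
    intro i
    dsimp only
    by_cases h0 : 0 ≤ i
    · rw [if_pos h0, if_pos (by omega)]; exact x.2 i
    · by_cases h1 : i = -1
      · subst h1
        rw [if_neg (by norm_num), if_pos (by norm_num)]
        have hx : x.1 (-1 + 1) = (pick (R := R) (x.1 0)).1 (-1 + 1) := by
          norm_num [pick_zero (R := R) (x.1 0) ⟨x, rfl⟩]
        rw [hx]
        exact (pick (R := R) (x.1 0)).2 (-1)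
      · rw [if_neg h0, if_neg (by omega)]
        exact (pick (R := R) (x.1 0)).2 i⟩

lemma rmap_apply_nonneg [Nonempty (Subshift n R)] (x : Subshift n R) (i : ℤ) (h : 0 ≤ i) :
    (rmap x).1 i = x.1 i := if_pos h

lemma rmap_congr [Nonempty (Subshift n R)] (x y : Subshift n R)
    (h : ∀ i : ℤ, 0 ≤ i → x.1 i = y.1 i) : rmap x = rmap y := by
  apply Subtype.ext
  funext i
  show (if 0 ≤ i then x.1 i else (pick (R := R) (x.1 0)).1 i)
      = (if 0 ≤ i then y.1 i else (pick (R := R) (y.1 0)).1 i)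
  by_cases h0 : 0 ≤ i
  · rw [if_pos h0, if_pos h0]; exact h i h0
  · rw [if_neg h0, if_neg h0, h 0 le_rfl]

lemma rmap_agree [Nonempty (Subshift n R)] (k : ℕ) (x y : Subshift n R)
    (h : ∀ i : ℤ, |i| ≤ (k : ℤ) → x.1 i = y.1 i) :
    ∀ i : ℤ, i ≤ (k : ℤ) → (rmap x).1 i = (rmap y).1 i := by
  intro i hi
  show (if 0 ≤ i then x.1 i else (pick (R := R) (x.1 0)).1 i)
      = (if 0 ≤ i then y.1 i else (pick (R := R) (y.1 0)).1 i)
  by_cases h0 : 0 ≤ i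
  · rw [if_pos h0, if_pos h0]; exact h i (by rw [abs_le]; omega)
  · rw [if_neg h0, if_neg h0, h 0 (by simp)]

/-- The building blocks of Bowen's `u`. -/
noncomputable def Fb [Nonempty (Subshift n R)] (φ : Subshift n R → ℝ) (j : ℕ)
    (x : Subshift n R) : ℝ :=
  φ (Subshift.shift^[j] x) - φ (Subshift.shift^[j] (rmap x))

/-- Bowen's function `u`. -/
noncomputable def uF [Nonempty (Subshift n R)] (φ : Subshift n R → ℝ)
    (x : Subshift n R) : ℝ :=
  ∑' j : ℕ, Fb φ j x

end BowenAux

/-- Bowen's lemma: if `var_k φ ≤ b c^k` on a two-sided subshift of finite type, then there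
is a continuous `u` such that `ψ := φ + u ∘ σ − u` satisfies `var_k ψ ≤ b' c'^k` and `ψ`
depends only on the coordinates with nonnegative index. -/
theorem stmt4 {n : ℕ} (R : Fin n → Fin n → Bool) (φ : Subshift n R → ℝ)
    (b c : ℝ) (hb : 0 < b) (hc : c ∈ Set.Ioo (0 : ℝ) 1)
    (hvar : ∀ k : ℕ, ∀ x y : Subshift n R,
      (∀ i : ℤ, |i| ≤ (k : ℤ) → x.1 i = y.1 i) → |φ x - φ y| ≤ b * c ^ k) :
    ∃ u : Subshift n R → ℝ, Continuous u ∧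
      ∃ b' c' : ℝ, 0 < b' ∧ c' ∈ Set.Ioo (0 : ℝ) 1 ∧
        (∀ k : ℕ, ∀ x y : Subshift n R,
          (∀ i : ℤ, |i| ≤ (k : ℤ) → x.1 i = y.1 i) →
          |(φ x + u x.shift - u x) - (φ y + u y.shift - u y)| ≤ b' * c' ^ k) ∧
        (∀ x y : Subshift n R, (∀ i : ℤ, 0 ≤ i → x.1 i = y.1 i) →
          φ x + u x.shift - u x = φ y + u y.shift - u y) := by
  obtain ⟨hc0, hc1⟩ := hc
  by_cases hne : Nonempty (Subshift n R)
  swap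
  · exact ⟨fun _ => 0, continuous_const, 1, 1/2, one_pos, by constructor <;> norm_num,
      fun k x y _ => (hne ⟨x⟩).elim, fun x y _ => (hne ⟨x⟩).elim⟩
  haveI := hne
  have h1c : (0:ℝ) < 1 - c := by linarith
  set Bu : ℝ := 4 * b * (1 - c)⁻¹ with hBudef
  have hBu : 0 < Bu := by positivity
  -- basic facts about the building blocks
  have hFbound : ∀ (j : ℕ) (x : Subshift n R), |BowenAux.Fb φ j x| ≤ b * c ^ j := by
    intro j x
    apply hvar
    intro i hi
    rw [abs_le] at hi
    rw [BowenAux.shift_iter, BowenAux.shift_iter,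
      BowenAux.rmap_apply_nonneg x (i + j) (by omega)]
  have hgeom : Summable (fun j : ℕ => c ^ j) := summable_geometric_of_lt_one hc0.le hc1
  have hFsum : ∀ x : Subshift n R, Summable (fun j => BowenAux.Fb φ j x) := by
    intro x
    apply Summable.of_norm_bounded (hgeom.mul_left b)
    intro j
    rw [Real.norm_eq_abs]
    exact hFbound j x
  -- boundedness of u
  have hub : ∀ x : Subshift n R, |BowenAux.uF φ x| ≤ b * (1 - c)⁻¹ := by
    intro x
    have h1 : |BowenAux.uF φ x| ≤ ∑' j : ℕ, ‖BowenAux.Fb φ j x‖ := by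
      rw [show |BowenAux.uF φ x| = ‖BowenAux.uF φ x‖ from rfl]
      exact norm_tsum_le_tsum_norm ((hFsum x).abs)
    have h2 : ∑' j : ℕ, ‖BowenAux.Fb φ j x‖ ≤ ∑' j : ℕ, b * c ^ j := by
      refine Summable.tsum_le_tsum (fun j => ?_) ((hFsum x).abs) (hgeom.mul_left b)
      rw [Real.norm_eq_abs]; exact hFbound j x
    have h3 : ∑' j : ℕ, b * c ^ j = b * (1 - c)⁻¹ := by
      rw [tsum_mul_left, tsum_geometric_of_lt_one hc0.le hc1]
    linarith
  -- the key variation estimate for u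
  have key : ∀ (k : ℕ) (x y : Subshift n R),
      (∀ i : ℤ, |i| ≤ (k : ℤ) → x.1 i = y.1 i) →
      |BowenAux.uF φ x - BowenAux.uF φ y| ≤ Bu * c ^ (k / 2) := by
    intro k x y hxy
    set m := k / 2 with hm
    have hmk : m ≤ k := Nat.div_le_self _ _
    have hmm : m ≤ k - m := by omega
    set D : ℕ → ℝ := fun j => BowenAux.Fb φ j x - BowenAux.Fb φ j y with hD
    have hDs : Summable D := (hFsum x).sub (hFsum y)
    have hragree := BowenAux.rmap_agree k x y hxy
    -- bound for small indices
    have hd1 : ∀ j : ℕ, j ≤ m → |D j| ≤ 2 * b * c ^ (k - j) := by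
      intro j hj
      have hA : |φ (Subshift.shift^[j] x) - φ (Subshift.shift^[j] y)| ≤ b * c ^ (k - j) := by
        apply hvar
        intro i hi
        rw [abs_le] at hi
        rw [BowenAux.shift_iter, BowenAux.shift_iter]
        exact hxy (i + j) (by rw [abs_le]; omega)
      have hB : |φ (Subshift.shift^[j] (BowenAux.rmap x))
          - φ (Subshift.shift^[j] (BowenAux.rmap y))| ≤ b * c ^ (k - j) := by
        apply hvar
        intro i hi
        rw [abs_le] at hi
        rw [BowenAux.shift_iter, BowenAux.shift_iter]
        exact hragree (i + j) (by omega)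
      have heq : D j = (φ (Subshift.shift^[j] x) - φ (Subshift.shift^[j] y))
          - (φ (Subshift.shift^[j] (BowenAux.rmap x))
            - φ (Subshift.shift^[j] (BowenAux.rmap y))) := by
        simp only [hD, BowenAux.Fb]; ring
      rw [heq]
      refine (abs_sub _ _).trans ?_
      linarith
    -- bound for all indices
    have hd2 : ∀ j : ℕ, |D j| ≤ 2 * b * c ^ j := by
      intro j
      calc |D j| ≤ |BowenAux.Fb φ j x| + |BowenAux.Fb φ j y| := abs_sub _ _
        _ ≤ 2 * b * c ^ j := by linarith [hFbound j x, hFbound j y]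
    -- split the sum
    have hsplit : BowenAux.uF φ x - BowenAux.uF φ y
        = (∑ j ∈ Finset.range (m+1), D j) + ∑' j : ℕ, D (j + (m+1)) := by
      rw [Summable.sum_add_tsum_nat_add (m+1) hDs, hD, Summable.tsum_sub (hFsum x) (hFsum y)]
      rfl
    -- bound on the finite part
    have hA : |∑ j ∈ Finset.range (m+1), D j| ≤ 2 * b * c ^ m * (1 - c)⁻¹ := by
      calc |∑ j ∈ Finset.range (m+1), D j| ≤ ∑ j ∈ Finset.range (m+1), |D j| :=
            Finset.abs_sum_le_sum_abs _ _
        _ ≤ ∑ j ∈ Finset.range (m+1), 2 * b * c ^ (k - j) := by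
            refine Finset.sum_le_sum fun j hj => hd1 j ?_
            rw [Finset.mem_range] at hj; omega
        _ = 2 * b * c ^ (k - m) * ∑ j ∈ Finset.range (m+1), c ^ (m - j) := by
            rw [Finset.mul_sum]
            refine Finset.sum_congr rfl fun j hj => ?_
            rw [Finset.mem_range] at hj
            have hkj : k - j = (k - m) + (m - j) := by omega
            rw [hkj, pow_add]
            ring
        _ = 2 * b * c ^ (k - m) * ∑ j ∈ Finset.range (m+1), c ^ j := by
            congr 1
            exact Finset.sum_range_reflect (fun t => c ^ t) (m+1)
        _ ≤ 2 * b * c ^ (k - m) * (1 - c)⁻¹ := by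
            refine mul_le_mul_of_nonneg_left ?_ (by positivity)
            rw [← tsum_geometric_of_lt_one hc0.le hc1]
            exact Summable.sum_le_tsum _ (fun j _ => by positivity) hgeom
        _ ≤ 2 * b * c ^ m * (1 - c)⁻¹ := by
            have := pow_le_pow_of_le_one hc0.le hc1.le hmm
            have h2b : (0:ℝ) ≤ 2 * b := by positivity
            have h1c' : (0:ℝ) ≤ (1-c)⁻¹ := by positivity
            nlinarith
    -- bound on the tail
    have hBs : Summable (fun j : ℕ => ‖D (j + (m+1))‖) := by
      apply Summable.of_nonneg_of_le (fun j => norm_nonneg _)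
        (fun j => ?_) ((hgeom.mul_left (2 * b * c ^ (m+1))))
      rw [Real.norm_eq_abs]
      calc |D (j + (m+1))| ≤ 2 * b * c ^ (j + (m+1)) := hd2 _
        _ = 2 * b * c ^ (m+1) * c ^ j := by rw [pow_add]; ring
    have hB : |∑' j : ℕ, D (j + (m+1))| ≤ 2 * b * c ^ m * (1 - c)⁻¹ := by
      calc |∑' j : ℕ, D (j + (m+1))| ≤ ∑' j : ℕ, ‖D (j + (m+1))‖ :=
            norm_tsum_le_tsum_norm hBs
        _ ≤ ∑' j : ℕ, 2 * b * c ^ (m+1) * c ^ j := by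
            refine Summable.tsum_le_tsum (fun j => ?_) hBs (hgeom.mul_left _)
            rw [Real.norm_eq_abs]
            calc |D (j + (m+1))| ≤ 2 * b * c ^ (j + (m+1)) := hd2 _
              _ = 2 * b * c ^ (m+1) * c ^ j := by rw [pow_add]; ring
        _ = 2 * b * c ^ (m+1) * (1 - c)⁻¹ := by
            rw [tsum_mul_left, tsum_geometric_of_lt_one hc0.le hc1]
        _ ≤ 2 * b * c ^ m * (1 - c)⁻¹ := by
            have hp : c ^ (m + 1) ≤ c ^ m := pow_le_pow_of_le_one hc0.le hc1.le (Nat.le_succ m)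
            have h1 := mul_le_mul_of_nonneg_left hp
              (by positivity : (0:ℝ) ≤ 2 * b * (1 - c)⁻¹)
            nlinarith [h1]
    calc |BowenAux.uF φ x - BowenAux.uF φ y|
        ≤ |∑ j ∈ Finset.range (m+1), D j| + |∑' j : ℕ, D (j + (m+1))| := by
          rw [hsplit]; exact abs_add_le _ _
      _ ≤ Bu * c ^ m := by rw [hBudef]; linarith
  -- continuity of u
  have hcont : Continuous (BowenAux.uF φ) := by
    rw [continuous_iff_continuousAt]
    intro x
    have : Filter.Tendsto (BowenAux.uF φ) (nhds x) (nhds (BowenAux.uF φ x)) := by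
      rw [Metric.tendsto_nhds]
      intro ε hε
      have htd : Filter.Tendsto (fun k : ℕ => Bu * c ^ k) Filter.atTop (nhds 0) := by
        have := tendsto_pow_atTop_nhds_zero_of_lt_one hc0.le hc1
        simpa using this.const_mul Bu
      obtain ⟨k, hk⟩ := (htd.eventually_lt_const hε).exists
      set V : Set (Subshift n R) :=
        ⋂ i ∈ Finset.Icc (-(2*k : ℤ)) (2*k : ℤ), {y : Subshift n R | y.1 i = x.1 i} with hV
      have hVopen : IsOpen V := by
        refine isOpen_biInter_finset fun i _ => ?_
        have hco : Continuous (fun y : Subshift n R => y.1 i) :=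
          (continuous_apply i).comp continuous_subtype_val
        exact (isOpen_discrete {x.1 i}).preimage hco
      have hxV : x ∈ V := by
        simp only [hV, Set.mem_iInter]
        intro i _
        rfl
      filter_upwards [hVopen.mem_nhds hxV] with y hy
      rw [Real.dist_eq]
      have hagree : ∀ i : ℤ, |i| ≤ ((2*k : ℕ) : ℤ) → y.1 i = x.1 i := by
        intro i hi
        rw [abs_le] at hi
        have := Set.mem_iInter.1 hy i
        simp only [Set.mem_iInter, Set.mem_setOf_eq] at this
        exact this (by rw [Finset.mem_Icc]; push_cast at hi ⊢; omega)
      calc |BowenAux.uF φ y - BowenAux.uF φ x| ≤ Bu * c ^ ((2*k) / 2) :=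
            key (2*k) y x hagree
        _ = Bu * c ^ k := by norm_num
        _ < ε := hk
    exact this
  -- setting up c' and b'
  set c' : ℝ := Real.sqrt c with hc'def
  have hc'0 : 0 < c' := Real.sqrt_pos.2 hc0
  have hc'1 : c' < 1 := by
    rw [hc'def, show (1:ℝ) = Real.sqrt 1 from (Real.sqrt_one).symm]
    exact Real.sqrt_lt_sqrt hc0.le hc1
  have hc'sq : c' ^ 2 = c := Real.sq_sqrt hc0.le
  have hcc' : c ≤ c' := by
    calc c = c' ^ 2 := hc'sq.symm
      _ ≤ c' ^ 1 := pow_le_pow_of_le_one hc'0.le hc'1.le (by norm_num)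
      _ = c' := pow_one c'
  -- conversion of exponents
  have hconv : ∀ (e k : ℕ), k ≤ 2 * e + 2 → c ^ e ≤ c' ^ k / c := by
    intro e k h
    rw [le_div_iff₀ hc0]
    calc c ^ e * c = c ^ (e + 1) := (pow_succ c e).symm
      _ = (c' ^ 2) ^ (e + 1) := by rw [hc'sq]
      _ = c' ^ (2 * (e + 1)) := by rw [← pow_mul]
      _ ≤ c' ^ k := pow_le_pow_of_le_one hc'0.le hc'1.le (by omega)
  set b' : ℝ := (b + 3 * Bu) / c with hb'def
  have hb' : 0 < b' := by positivity
  refine ⟨BowenAux.uF φ, hcont, b', c', hb', ⟨hc'0, hc'1⟩, ?_, ?_⟩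
  · -- the variation bound for ψ
    intro k x y hxy
    have heq : (φ x + BowenAux.uF φ x.shift - BowenAux.uF φ x)
        - (φ y + BowenAux.uF φ y.shift - BowenAux.uF φ y)
        = (φ x - φ y) + (BowenAux.uF φ x.shift - BowenAux.uF φ y.shift)
          - (BowenAux.uF φ x - BowenAux.uF φ y) := by ring
    have hT1 : |φ x - φ y| ≤ b * c' ^ k := by
      refine (hvar k x y hxy).trans ?_
      exact mul_le_mul_of_nonneg_left (pow_le_pow_left₀ hc0.le hcc' k) hb.le
    have hT3 : |BowenAux.uF φ x - BowenAux.uF φ y| ≤ Bu / c * c' ^ k := by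
      refine (key k x y hxy).trans ?_
      rw [div_mul_eq_mul_div, mul_div_assoc]
      exact mul_le_mul_of_nonneg_left (hconv (k/2) k (by omega)) hBu.le
    have htri : |(φ x + BowenAux.uF φ x.shift - BowenAux.uF φ x)
        - (φ y + BowenAux.uF φ y.shift - BowenAux.uF φ y)|
        ≤ |φ x - φ y| + |BowenAux.uF φ x.shift - BowenAux.uF φ y.shift|
          + |BowenAux.uF φ x - BowenAux.uF φ y| := by
      rw [heq]
      exact (abs_sub _ _).trans (add_le_add_left (abs_add_le _ _) _)
    have hc'k : (0:ℝ) ≤ c' ^ k := by positivity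
    by_cases hk : k = 0
    · subst hk
      have hT2 : |BowenAux.uF φ x.shift - BowenAux.uF φ y.shift|
          ≤ 2 * (b * (1 - c)⁻¹) := by
        calc |_ - _| ≤ |BowenAux.uF φ x.shift| + |BowenAux.uF φ y.shift| := abs_sub _ _
          _ ≤ 2 * (b * (1 - c)⁻¹) := by linarith [hub x.shift, hub y.shift]
      have hbc : b * c ≤ b := by nlinarith
      have hBuc : Bu / c * c = Bu := div_mul_cancel₀ _ hc0.ne'
      rw [pow_zero, mul_one] at hT1 hT3 ⊢
      have h2b : 2 * (b * (1 - c)⁻¹) = Bu / 2 := by rw [hBudef]; ring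
      rw [hb'def, le_div_iff₀ hc0]
      have hBuc2 : Bu ≤ Bu / c := by
        rw [le_div_iff₀ hc0]; nlinarith
      nlinarith [htri, hT1, hT2, hT3, hBu, hc0, hc1]
    · have hagree' : ∀ i : ℤ, |i| ≤ ((k-1 : ℕ) : ℤ) → x.shift.1 i = y.shift.1 i := by
        intro i hi
        rw [abs_le] at hi
        show x.1 (i+1) = y.1 (i+1)
        exact hxy (i+1) (by rw [abs_le]; omega)
      have hT2 : |BowenAux.uF φ x.shift - BowenAux.uF φ y.shift| ≤ Bu / c * c' ^ k := by
        refine (key (k-1) x.shift y.shift hagree').trans ?_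
        rw [div_mul_eq_mul_div, mul_div_assoc]
        exact mul_le_mul_of_nonneg_left (hconv ((k-1)/2) k (by omega)) hBu.le
      have hcoef : b + Bu / c + Bu / c ≤ b' := by
        rw [hb'def, le_div_iff₀ hc0]
        have hBuc : Bu / c * c = Bu := div_mul_cancel₀ _ hc0.ne'
        nlinarith [hBu, hc0, hc1]
      calc |(φ x + BowenAux.uF φ x.shift - BowenAux.uF φ x)
          - (φ y + BowenAux.uF φ y.shift - BowenAux.uF φ y)|
          ≤ |φ x - φ y| + |BowenAux.uF φ x.shift - BowenAux.uF φ y.shift|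
            + |BowenAux.uF φ x - BowenAux.uF φ y| := htri
        _ ≤ b * c' ^ k + Bu / c * c' ^ k + Bu / c * c' ^ k := by linarith
        _ = (b + Bu / c + Bu / c) * c' ^ k := by ring
        _ ≤ b' * c' ^ k := mul_le_mul_of_nonneg_right hcoef hc'k
  · -- ψ depends only on the future coordinates
    intro x y h
    have hr : BowenAux.rmap x = BowenAux.rmap y := BowenAux.rmap_congr x y h
    have hrs : BowenAux.rmap x.shift = BowenAux.rmap y.shift := by
      refine BowenAux.rmap_congr _ _ fun i hi => ?_
      show x.1 (i+1) = y.1 (i+1)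
      exact h (i+1) (by omega)
    set d : ℕ → ℝ := fun j => φ (Subshift.shift^[j] x) - φ (Subshift.shift^[j] y) with hd
    have hdb : ∀ j : ℕ, |d j| ≤ b * c ^ j := by
      intro j
      apply hvar
      intro i hi
      rw [abs_le] at hi
      rw [BowenAux.shift_iter, BowenAux.shift_iter]
      exact h (i + j) (by omega)
    have hds : Summable d := by
      apply Summable.of_norm_bounded (hgeom.mul_left b)
      intro j
      rw [Real.norm_eq_abs]
      exact hdb j
    have h1 : BowenAux.uF φ x - BowenAux.uF φ y = ∑' j : ℕ, d j := by
      rw [BowenAux.uF, BowenAux.uF, ← Summable.tsum_sub (hFsum x) (hFsum y)]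
      refine tsum_congr fun j => ?_
      simp only [BowenAux.Fb, hd, hr]
      ring
    have hds1 : Summable (fun j : ℕ => d (j + 1)) := by
      exact (summable_nat_add_iff 1).2 hds
    have h2 : BowenAux.uF φ x.shift - BowenAux.uF φ y.shift = ∑' j : ℕ, d (j + 1) := by
      rw [BowenAux.uF, BowenAux.uF, ← Summable.tsum_sub (hFsum x.shift) (hFsum y.shift)]
      refine tsum_congr fun j => ?_
      simp only [BowenAux.Fb, hd, hrs]
      rw [← Function.iterate_succ_apply Subshift.shift j x,
        ← Function.iterate_succ_apply Subshift.shift j y]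
      ring
    have h3 : ∑' j : ℕ, d j = d 0 + ∑' j : ℕ, d (j + 1) := Summable.tsum_eq_zero_add hds
    have h4 : d 0 = φ x - φ y := by simp [hd]
    linarith [h1, h2, h3, h4]
end

section
/- For a transitive continuous map f on a compact metric space satisfying the periodic gluing orbit property, given any nonempty open set U ⊂ N, the set of f-invariant probability measures μ with μ(U) = 0 is closed with empty interior in the space of invariant measures with the weak* topology. Consequently, fully supported invariant measures form a residual subset of the space of invariant measures. -/
open MeasureTheory

/-- The periodic gluing orbit property: for every `ε > 0` there is `m = m(ε) ≥ 1` such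
that any finite collection of orbit segments can be `ε`-shadowed by a single periodic
orbit, with time lags at most `m(ε)` between consecutive segments and period equal to
the total length. -/
def PeriodicGluingOrbit {Nm : Type*} [MetricSpace Nm] (f : Nm → Nm) : Prop :=
  ∀ ε : ℝ, 0 < ε → ∃ m : ℕ, 1 ≤ m ∧
    ∀ (k : ℕ) (x : Fin k → Nm) (nseg : Fin k → ℕ),
      ∃ (p : Fin k → ℕ) (y : Nm),
        (∀ i, p i ≤ m) ∧
        f^[∑ i, (nseg i + p i)] y = y ∧
        ∀ i : Fin k, ∀ j : ℕ, j ≤ nseg i →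
          dist (f^[j + ∑ l ∈ Finset.univ.filter (fun l => l < i), (nseg l + p l)] y)
            (f^[j] (x i)) ≤ ε

open Filter Topology
open scoped ENNReal NNReal BoundedContinuousFunction

namespace Stmt17Aux

variable {Nm : Type*} [MetricSpace Nm] [MeasurableSpace Nm] [BorelSpace Nm]

/-- The uniform measure on a periodic orbit of period `n`. -/
noncomputable def orbitMeasure (f : Nm → Nm) (y : Nm) (n : ℕ) : Measure Nm :=
  (n : ℝ≥0∞)⁻¹ • ∑ j ∈ Finset.range n, Measure.dirac (f^[j] y)

lemma orbitMeasure_apply (f : Nm → Nm) (y : Nm) (n : ℕ) (s : Set Nm) :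
    orbitMeasure f y n s = (n : ℝ≥0∞)⁻¹ * ∑ j ∈ Finset.range n, Measure.dirac (f^[j] y) s := by
  simp [orbitMeasure, Measure.finset_sum_apply]

lemma orbitMeasure_isProb (f : Nm → Nm) (y : Nm) {n : ℕ} (hn : n ≠ 0) :
    IsProbabilityMeasure (orbitMeasure f y n) := by
  constructor
  rw [orbitMeasure_apply f y n Set.univ]
  simp [ENNReal.inv_mul_cancel (by exact_mod_cast hn) (by simp : (n : ℝ≥0∞) ≠ ∞)]

omit [MetricSpace Nm] [BorelSpace Nm] in
lemma orbitMeasure_map (f : Nm → Nm) (hf : Measurable f) (y : Nm) {n : ℕ}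
    (hper : f^[n] y = y) (hn : n ≠ 0) :
    (orbitMeasure f y n).map f = orbitMeasure f y n := by
  obtain ⟨m, rfl⟩ : ∃ m, n = m + 1 := ⟨n - 1, by omega⟩
  have hmap : (∑ j ∈ Finset.range (m+1), Measure.dirac (f^[j] y)).map f
      = ∑ j ∈ Finset.range (m+1), Measure.dirac (f^[j+1] y) := by
    induction' (Finset.range (m+1)) using Finset.induction with a s ha ih
    · simp
    · rw [Finset.sum_insert ha, Measure.map_add _ _ hf, ih, Measure.map_dirac' hf,
        Finset.sum_insert ha, Function.iterate_succ_apply']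
  have hshift : ∑ j ∈ Finset.range (m+1), Measure.dirac (f^[j+1] y)
      = ∑ j ∈ Finset.range (m+1), Measure.dirac (f^[j] y) := by
    rw [Finset.sum_range_succ, Finset.sum_range_succ', hper]
    simp
  simp only [orbitMeasure]
  rw [Measure.map_smul, hmap, hshift]

lemma orbitMeasure_pos (f : Nm → Nm) (y : Nm) {n : ℕ} (hn : n ≠ 0)
    {U : Set Nm} (hU : MeasurableSet U) (hy : y ∈ U) :
    (n : ℝ≥0∞)⁻¹ ≤ orbitMeasure f y n U := by
  rw [orbitMeasure_apply f y n U]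
  have h0 : (0:ℕ) ∈ Finset.range n := Finset.mem_range.mpr (Nat.pos_of_ne_zero hn)
  have : (1 : ℝ≥0∞) ≤ ∑ j ∈ Finset.range n, Measure.dirac (f^[j] y) U := by
    calc (1:ℝ≥0∞) = Measure.dirac (f^[0] y) U := by
          simp [Measure.dirac_apply' _ hU, hy]
      _ ≤ _ := Finset.single_le_sum (f := fun j => Measure.dirac (f^[j] y) U)
          (fun j _ => zero_le) h0
  calc (n : ℝ≥0∞)⁻¹ = (n : ℝ≥0∞)⁻¹ * 1 := (mul_one _).symm
    _ ≤ _ := mul_le_mul_right this _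

/-- In the weak* topology, the set of probability measures vanishing on a fixed open set
is closed (by the portmanteau theorem). -/
lemma isClosed_nullOpen (U : Set Nm) (hU : IsOpen U) :
    IsClosed {μ : ProbabilityMeasure Nm | μ.toMeasure U = 0} := by
  rw [isClosed_iff_clusterPt]
  intro μ hμ
  set S := {μ : ProbabilityMeasure Nm | μ.toMeasure U = 0} with hS
  haveI : (𝓝 μ ⊓ 𝓟 S).NeBot := hμ
  have ht : Tendsto (id : ProbabilityMeasure Nm → _) (𝓝 μ ⊓ 𝓟 S) (𝓝 μ) :=
    tendsto_id.mono_left inf_le_left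
  have h := ProbabilityMeasure.le_liminf_measure_open_of_tendsto ht hU
  have hev : ∀ᶠ ν in (𝓝 μ ⊓ 𝓟 S), ((id ν : ProbabilityMeasure Nm) : Measure Nm) U = (0:ℝ≥0∞) :=
    eventually_inf_principal.mpr (Eventually.of_forall (fun ν hν => hν))
  rw [liminf_congr hev, liminf_const (0:ℝ≥0∞)] at h
  simpa [hS] using le_antisymm h zero_le

omit [MeasurableSpace Nm] [BorelSpace Nm] in
/-- There is a periodic point inside any nonempty open set, by the gluing orbit property. -/
lemma exists_periodic_in_open (f : Nm → Nm) (hglue : PeriodicGluingOrbit f)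
    {U : Set Nm} (hU : IsOpen U) (hne : U.Nonempty) :
    ∃ (y : Nm) (n : ℕ), n ≠ 0 ∧ f^[n] y = y ∧ y ∈ U := by
  obtain ⟨z, hz⟩ := hne
  obtain ⟨ε, hε, hball⟩ := Metric.isOpen_iff.mp hU z hz
  obtain ⟨m, hm1, hm⟩ := hglue (ε/2) (by positivity)
  obtain ⟨p, y, hp, hper, hsh⟩ := hm 1 (fun _ => z) (fun _ => 1)
  refine ⟨y, 1 + p 0, by omega, ?_, ?_⟩
  · have : ∑ i : Fin 1, ((fun _ => 1) i + p i) = 1 + p 0 := by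
      simp [Fin.sum_univ_one]
    rwa [this] at hper
  · have h0 := hsh 0 0 (by norm_num)
    have hemp : (Finset.univ.filter (fun l : Fin 1 => l < 0)) = ∅ := by decide
    rw [hemp] at h0
    simp only [Finset.sum_empty, Nat.add_zero, Function.iterate_zero_apply] at h0
    exact hball (by rw [Metric.mem_ball]; linarith [dist_nonneg (x := y) (y := z)])

/-- Invariant measures giving positive mass to a fixed nonempty open set are dense in the
space of invariant measures, for a map with the periodic gluing orbit property. -/
lemma dense_pos (f : Nm → Nm) (hf : Continuous f) (hglue : PeriodicGluingOrbit f)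
    {U : Set Nm} (hU : IsOpen U) (hne : U.Nonempty) :
    Dense {μ : {μ : ProbabilityMeasure Nm // μ.toMeasure.map f = μ.toMeasure} |
        μ.1.toMeasure U ≠ 0} := by
  obtain ⟨y, n, hn, hper, hy⟩ := exists_periodic_in_open f hglue hU hne
  set ω : Measure Nm := orbitMeasure f y n with hω
  haveI hωprob : IsProbabilityMeasure ω := orbitMeasure_isProb f y hn
  have hωmap : ω.map f = ω := orbitMeasure_map f hf.measurable y hper hn
  have hωpos : (n : ℝ≥0∞)⁻¹ ≤ ω U := orbitMeasure_pos f y hn hU.measurableSet hy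
  intro μ
  set δ : ℕ → ℝ≥0∞ := fun k => ((k+1 : ℕ) : ℝ≥0∞)⁻¹ with hδ
  have hδ1 : ∀ k, δ k ≤ 1 := fun k => ENNReal.inv_le_one.mpr
    (by exact_mod_cast Nat.one_le_iff_ne_zero.mpr (Nat.succ_ne_zero k))
  have hδ0 : ∀ k, δ k ≠ 0 := fun k => ENNReal.inv_ne_zero.mpr (by simp)
  set ν : ℕ → Measure Nm := fun k => (1 - δ k) • μ.1.toMeasure + δ k • ω with hν
  have hprob : ∀ k, IsProbabilityMeasure (ν k) := by
    intro k
    constructor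
    simp only [hν, Measure.add_apply, Measure.smul_apply, smul_eq_mul, measure_univ, mul_one]
    exact tsub_add_cancel_of_le (hδ1 k)
  have hinv : ∀ k, (ν k).map f = ν k := by
    intro k
    simp only [hν]
    rw [Measure.map_add _ _ hf.measurable, Measure.map_smul, Measure.map_smul, μ.2, hωmap]
  have hpos : ∀ k, ν k U ≠ 0 := by
    intro k
    have : δ k * ω U ≤ ν k U := by
      simp only [hν, Measure.add_apply, Measure.smul_apply, smul_eq_mul]
      exact le_add_self
    refine fun h => hδ0 k ?_
    rw [h] at this
    have hωU : ω U ≠ 0 := by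
      intro h0
      rw [h0, le_zero_iff] at hωpos
      exact ENNReal.inv_ne_zero.mpr (by simp) hωpos
    exact (mul_eq_zero.mp (le_antisymm this zero_le)).resolve_right hωU
  set νP : ℕ → ProbabilityMeasure Nm := fun k => ⟨ν k, hprob k⟩ with hνP
  have htend : Tendsto νP atTop (𝓝 μ.1) := by
    rw [ProbabilityMeasure.tendsto_iff_forall_lintegral_tendsto]
    intro g
    have hB : ∫⁻ x, g x ∂ω ≠ ∞ := (g.lintegral_lt_top_of_nnreal _).ne
    have hcalc : ∀ k, ∫⁻ x, g x ∂(νP k : Measure Nm)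
        = (1 - δ k) * ∫⁻ x, g x ∂(μ.1 : Measure Nm) + δ k * ∫⁻ x, g x ∂ω := by
      intro k
      show ∫⁻ x, g x ∂(ν k) = _
      simp only [hν]
      rw [lintegral_add_measure, lintegral_smul_measure, lintegral_smul_measure]
      simp only [smul_eq_mul]
    simp only [hcalc]
    have hδtend : Tendsto δ atTop (𝓝 0) :=
      ENNReal.tendsto_inv_nat_nhds_zero.comp (tendsto_add_atTop_nat 1)
    have h1 : Tendsto (fun k => 1 - δ k) atTop (𝓝 1) := by
      simpa using ENNReal.Tendsto.sub tendsto_const_nhds hδtend (Or.inl ENNReal.one_ne_top)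
    have hmul1 := ENNReal.Tendsto.mul_const h1 (Or.inl (one_ne_zero) : (1:ℝ≥0∞) ≠ 0 ∨ _)
      (b := ∫⁻ x, g x ∂(μ.1 : Measure Nm))
    have hmul2 := ENNReal.Tendsto.mul_const hδtend (Or.inr hB) (b := ∫⁻ x, g x ∂ω)
    simpa using hmul1.add hmul2
  have htendT : Tendsto (fun k => (⟨νP k, hinv k⟩ :
      {μ : ProbabilityMeasure Nm // μ.toMeasure.map f = μ.toMeasure})) atTop (𝓝 μ) :=
    tendsto_subtype_rng.mpr htend
  exact mem_closure_of_tendsto htendT (Eventually.of_forall (fun k => hpos k))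

end Stmt17Aux

/-- For a transitive continuous map with the periodic gluing orbit property, for every
nonempty open `U` the set of invariant probability measures `μ` with `μ(U) = 0` is
closed with empty interior in the space of invariant measures (weak* topology); hence
fully supported invariant measures form a residual subset of the space of invariant
measures. -/
theorem stmt17 {Nm : Type*} [MetricSpace Nm] [CompactSpace Nm]
    [SecondCountableTopology Nm] [MeasurableSpace Nm] [BorelSpace Nm]
    (f : Nm → Nm) (hf : Continuous f)
    (htrans : ∃ x : Nm, Dense (Set.range fun n : ℕ => f^[n] x))
    (hglue : PeriodicGluingOrbit f) :
    (∀ U : Set Nm, IsOpen U → U.Nonempty →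
      IsClosed {μ : {μ : ProbabilityMeasure Nm // μ.toMeasure.map f = μ.toMeasure} |
          μ.1.toMeasure U = 0} ∧
      interior {μ : {μ : ProbabilityMeasure Nm // μ.toMeasure.map f = μ.toMeasure} |
          μ.1.toMeasure U = 0} = ∅) ∧
    {μ : {μ : ProbabilityMeasure Nm // μ.toMeasure.map f = μ.toMeasure} |
        ∀ U : Set Nm, IsOpen U → U.Nonempty → 0 < μ.1.toMeasure U} ∈
      residual {μ : ProbabilityMeasure Nm // μ.toMeasure.map f = μ.toMeasure} := by
  have key : ∀ U : Set Nm, IsOpen U → U.Nonempty →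
      IsClosed {μ : {μ : ProbabilityMeasure Nm // μ.toMeasure.map f = μ.toMeasure} |
          μ.1.toMeasure U = 0} ∧
      interior {μ : {μ : ProbabilityMeasure Nm // μ.toMeasure.map f = μ.toMeasure} |
          μ.1.toMeasure U = 0} = ∅ := by
    intro U hUo hUne
    constructor
    · exact (Stmt17Aux.isClosed_nullOpen U hUo).preimage continuous_subtype_val
    · rw [interior_eq_empty_iff_dense_compl]
      exact Stmt17Aux.dense_pos f hf hglue hUo hUne
  refine ⟨key, ?_⟩
  obtain ⟨B, Bcount, Bne, Bbasis⟩ := TopologicalSpace.exists_countable_basis Nm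
  have hmem : (⋂ U ∈ B, {μ : {μ : ProbabilityMeasure Nm // μ.toMeasure.map f = μ.toMeasure} |
      μ.1.toMeasure U = 0}ᶜ) ∈
      residual {μ : ProbabilityMeasure Nm // μ.toMeasure.map f = μ.toMeasure} := by
    rw [countable_bInter_mem Bcount]
    intro U hUB
    have hUo : IsOpen U := Bbasis.isOpen hUB
    have hUne : U.Nonempty := Set.nonempty_iff_ne_empty.mpr (fun h => Bne (h ▸ hUB))
    exact residual_of_dense_open ((key U hUo hUne).1.isOpen_compl)
      (interior_eq_empty_iff_dense_compl.mp (key U hUo hUne).2)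
  refine Filter.mem_of_superset hmem ?_
  intro μ hμ
  simp only [Set.mem_iInter, Set.mem_compl_iff, Set.mem_setOf_eq] at hμ
  intro V hVo hVne
  obtain ⟨x, hx⟩ := hVne
  obtain ⟨W, hWB, hxW, hWV⟩ := Bbasis.exists_subset_of_mem_open hx hVo
  exact lt_of_lt_of_le (pos_iff_ne_zero.mpr (hμ W hWB)) (measure_mono hWV)
end
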